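/- Let X be a Banach space, Y a normed space, F : X ⇉ Y a closed set-valued map, (x̄,ȳ) ∈ gph F, (u,v) ∈ X×Y and γ ∈ (0,1]. If liminf |∇φ^γ(·,y)|(x) > 0, where the liminf is taken over (x,y) →_{(u,v)} (x̄,ȳ) with φ(x,y) > 0 and φ(x,y)^γ/‖(x,y) − (x̄,ȳ)‖ → 0, then there exist reals τ, δ > 0 such that d(x, F⁻¹(y)) ≤ τ [d(y, F(x))]^γ for all (x,y) ∈ B((x̄,ȳ), δ) ∩ ((x̄,ȳ) + cone B((u,v), δ)) with d(y, F(x)) ≤ δ ‖(x,y) − (x̄,ȳ)‖^{1/γ}; that is, F is directionally metrically γ-regular at (x̄,ȳ) in direction (u,v) with modulus τ. -/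

import Mathlib

open Filter Metric Set Topology
open scoped ENNReal NNReal Classical

noncomputable section

/-- The conic hull `⋃ λ ≥ 0, λ • B((u,v), ε)` of the open ball of radius `ε` around `(u, v)`
in `X × Y`, where `X × Y` carries the sum norm `‖(x,y)‖ = ‖x‖ + ‖y‖`. -/
def coneBall2 {X Y : Type*} [NormedAddCommGroup X] [NormedSpace ℝ X]
    [NormedAddCommGroup Y] [NormedSpace ℝ Y] (u : X) (v : Y) (ε : ℝ) : Set (X × Y) :=
  {p | ∃ lam : ℝ, 0 ≤ lam ∧ ∃ w : X, ∃ z : Y, ‖w - u‖ + ‖z - v‖ < ε ∧ p = (lam • w, lam • z)}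

/-- `F` is directionally metrically `γ`-regular at `(xbar, ybar)` in direction `(u, v)`
with modulus `τ`: there are `δ, ε, η > 0` such that `d(x, F⁻¹(y)) ≤ τ d(y, F(x))^γ`
for all `(x,y) ∈ B((xbar,ybar), δ)` with `(x,y) ∈ (xbar,ybar) + cone B((u,v), ε)` and
`d(y,F(x)) ≤ η ‖(x,y)-(xbar,ybar)‖^(1/γ)`.  Distances to sets are extended-real valued
(equal to `+∞` for the empty set). -/
def DirHolderRegular {X Y : Type*} [NormedAddCommGroup X] [NormedSpace ℝ X]
    [NormedAddCommGroup Y] [NormedSpace ℝ Y]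
    (F : X → Set Y) (xbar : X) (ybar : Y) (u : X) (v : Y) (γ τ : ℝ) : Prop :=
  ∃ δ > (0:ℝ), ∃ ε > (0:ℝ), ∃ η > (0:ℝ), ∀ x : X, ∀ y : Y,
    ‖x - xbar‖ + ‖y - ybar‖ < δ →
    (x - xbar, y - ybar) ∈ coneBall2 u v ε →
    EMetric.infEdist y (F x) ≤ ENNReal.ofReal (η * (‖x - xbar‖ + ‖y - ybar‖) ^ (1/γ)) →
    EMetric.infEdist x {x' : X | y ∈ F x'} ≤ ENNReal.ofReal τ * EMetric.infEdist y (F x) ^ γ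

/-- The lower semicontinuous envelope `φ(x,y) = liminf_{x' → x} d(y, F(x'))`. -/
def lscEnv {X Y : Type*} [NormedAddCommGroup X] [NormedSpace ℝ X] [NormedAddCommGroup Y]
    (F : X → Set Y) (x : X) (y : Y) : ℝ≥0∞ :=
  Filter.liminf (fun x' : X => EMetric.infEdist y (F x')) (𝓝 x)

/-- The nonlocal slope `|Γf|(x)`: equal to `+∞` if `f x = +∞`, to `0` if `x` is a local
minimum of `f`, and otherwise to `sup_{z ≠ x} [f(x) − f(z)]₊ / d(x,z)` (the positive part
being realized by the truncated subtraction of `ℝ≥0∞`). -/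
def nonlocalSlope {X : Type*} [PseudoEMetricSpace X] (f : X → ℝ≥0∞) (x : X) : ℝ≥0∞ :=
  if f x = ⊤ then ⊤
  else if ∀ᶠ z in 𝓝 x, f x ≤ f z then 0
  else ⨆ z : {z : X // z ≠ x}, (f x - f (z : X)) / edist x (z : X)

/-- The local slope `|∇f|(x)`: equal to `+∞` if `f x = +∞`, to `0` if `x` is a local
minimum of `f`, and otherwise to `limsup_{z → x, z ≠ x} (f(x) − f(z)) / d(x,z)`. -/
def localSlope {X : Type*} [PseudoEMetricSpace X] (f : X → ℝ≥0∞) (x : X) : ℝ≥0∞ :=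
  if f x = ⊤ then ⊤
  else if ∀ᶠ z in 𝓝 x, f x ≤ f z then 0
  else Filter.limsup (fun z : X => (f x - f z) / edist x z) (𝓝[≠] x)

/-- The filter of directional convergence `(x,y) →_{(u,v)} (xbar,ybar)`:
convergence to `(xbar,ybar)` together with eventual membership of `(x,y) − (xbar,ybar)`
in every conic neighborhood `cone B((u,v), δ)`, `δ > 0`, of the direction `(u,v)`. -/
def dirFilter {X Y : Type*} [NormedAddCommGroup X] [NormedSpace ℝ X]
    [NormedAddCommGroup Y] [NormedSpace ℝ Y] (xbar : X) (ybar : Y) (u : X) (v : Y) :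
    Filter (X × Y) :=
  𝓝 (xbar, ybar) ⊓
    ⨅ (δ : ℝ) (_ : 0 < δ), 𝓟 {p : X × Y | (p.1 - xbar, p.2 - ybar) ∈ coneBall2 u v δ}

/-- The filter encoding the constrained directional convergence
`(x,y) →_{(u,v)} (xbar,ybar)`, `φ(x,y) > 0`, `φ(x,y)^γ/‖(x,y) − (xbar,ybar)‖ → 0`. -/
def dirRegFilter {X Y : Type*} [NormedAddCommGroup X] [NormedSpace ℝ X]
    [NormedAddCommGroup Y] [NormedSpace ℝ Y]
    (F : X → Set Y) (xbar : X) (ybar : Y) (u : X) (v : Y) (γ : ℝ) : Filter (X × Y) :=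
  dirFilter xbar ybar u v ⊓ 𝓟 {p : X × Y | 0 < lscEnv F p.1 p.2} ⊓
    ⨅ (η : ℝ) (_ : 0 < η),
      𝓟 {p : X × Y |
        lscEnv F p.1 p.2 ^ γ < ENNReal.ofReal (η * (‖p.1 - xbar‖ + ‖p.2 - ybar‖))}


section AuxLemmas

theorem my_ekeland {X : Type*} [MetricSpace X] [CompleteSpace X] (f : X → ℝ≥0∞)
    (hf : LowerSemicontinuous f) (σ : ℝ≥0∞) (hσ0 : σ ≠ 0) (hσt : σ ≠ ⊤)
    (x₀ : X) (h₀ : f x₀ ≠ ⊤) :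
    ∃ z : X, f z + σ * edist x₀ z ≤ f x₀ ∧ ∀ w, f z ≤ f w + σ * edist z w := by
  set S : X → Set X := fun x => {w | f w + σ * edist x w ≤ f x} with hSdef
  have hself : ∀ x, x ∈ S x := fun x => by simp [hSdef]
  have hle : ∀ x w, w ∈ S x → f w ≤ f x := fun x w h => le_trans le_self_add h
  have htrans : ∀ x x' w, x' ∈ S x → w ∈ S x' → w ∈ S x := by
    intro x x' w h1 h2
    have : f w + σ * edist x w ≤ (f w + σ * edist x' w) + σ * edist x x' := by
      calc f w + σ * edist x w ≤ f w + σ * (edist x x' + edist x' w) := by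
            gcongr
            exact edist_triangle _ _ _
        _ = (f w + σ * edist x' w) + σ * edist x x' := by ring
    calc f w + σ * edist x w ≤ (f w + σ * edist x' w) + σ * edist x x' := this
      _ ≤ f x' + σ * edist x x' := add_le_add h2 le_rfl
      _ ≤ f x := h1
  have key : ∀ x : X, f x ≠ ⊤ → ∀ n : ℕ, ∃ w, w ∈ S x ∧
      f w < (⨅ w' : S x, f w') + (2:ℝ≥0∞)⁻¹ ^ n := by
    intro x hx n
    have h1 : (⨅ w' : S x, f w') ≤ f x := iInf_le_of_le ⟨x, hself x⟩ le_rfl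
    have h2 : (⨅ w' : S x, f w') < (⨅ w' : S x, f w') + (2:ℝ≥0∞)⁻¹ ^ n :=
      ENNReal.lt_add_right (ne_top_of_le_ne_top hx h1) (by simp)
    rw [iInf_lt_iff] at h2
    obtain ⟨⟨w, hw⟩, h⟩ := h2
    exact ⟨w, hw, h⟩
  choose! next hmem hlt using key
  set seq : ℕ → X := fun n => Nat.rec x₀ (fun n x => next x n) n with hseqdef
  have hseq0 : seq 0 = x₀ := rfl
  have hseqsucc : ∀ n, seq (n + 1) = next (seq n) n := fun n => rfl
  have hfin : ∀ n, f (seq n) ≠ ⊤ := by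
    intro n
    induction n with
    | zero => exact h₀
    | succ n ih =>
      exact ne_top_of_le_ne_top ih (hle _ _ (by rw [hseqsucc]; exact hmem _ ih n))
  have hstep : ∀ n, seq (n + 1) ∈ S (seq n) := by
    intro n; rw [hseqsucc]; exact hmem _ (hfin n) n
  have hchain : ∀ n m, n ≤ m → seq m ∈ S (seq n) := by
    intro n m hnm
    induction m, hnm using Nat.le_induction with
    | base => exact hself _
    | succ m hnm ih => exact htrans _ _ _ ih (hstep m)
  have hmono : ∀ n m, n ≤ m → f (seq m) ≤ f (seq n) := fun n m h => hle _ _ (hchain n m h)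
  -- telescoping sum
  have tele : ∀ N : ℕ, (∑ k ∈ Finset.range N, (f (seq k) - f (seq (k+1)))) ≤
      f x₀ - f (seq N) := by
    intro N
    induction N with
    | zero => simp
    | succ N ih =>
      rw [Finset.sum_range_succ]
      calc _ ≤ (f x₀ - f (seq N)) + (f (seq N) - f (seq (N+1))) := by gcongr
        _ = f x₀ - f (seq (N+1)) :=
          tsub_add_tsub_cancel (by rw [← hseq0]; exact hmono 0 N (Nat.zero_le _))
            (hmono N (N+1) (Nat.le_succ _))
  have htsum : σ * (∑' n, edist (seq n) (seq (n+1))) ≤ f x₀ := by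
    rw [← ENNReal.tsum_mul_left]
    have h1 : ∀ n, σ * edist (seq n) (seq (n+1)) ≤ f (seq n) - f (seq (n+1)) := by
      intro n
      exact ENNReal.le_sub_of_add_le_left (hfin (n+1)) (hstep n)
    calc (∑' n, σ * edist (seq n) (seq (n+1))) ≤ ∑' n, (f (seq n) - f (seq (n+1))) := by
          exact ENNReal.tsum_le_tsum h1
      _ ≤ f x₀ := by
        rw [ENNReal.tsum_eq_iSup_sum]
        refine iSup_le fun s => ?_
        obtain ⟨N, hN⟩ := s.exists_nat_subset_range
        calc (∑ k ∈ s, (f (seq k) - f (seq (k+1)))) ≤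
              ∑ k ∈ Finset.range N, (f (seq k) - f (seq (k+1))) :=
                Finset.sum_le_sum_of_subset hN
          _ ≤ f x₀ - f (seq N) := tele N
          _ ≤ f x₀ := tsub_le_self
  have htne : (∑' n, edist (seq n) (seq (n+1))) ≠ ⊤ := by
    have : (∑' n, edist (seq n) (seq (n+1))) ≤ f x₀ / σ :=
      (ENNReal.le_div_iff_mul_le (Or.inl hσ0) (Or.inl hσt)).mpr (by rwa [mul_comm])
    exact ne_top_of_le_ne_top (ENNReal.div_lt_top h₀ hσ0).ne this
  have hcauchy : CauchySeq seq :=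
    cauchySeq_of_edist_le_of_tsum_ne_top _ (fun n => le_rfl) htne
  obtain ⟨z, hz⟩ := cauchySeq_tendsto_of_complete hcauchy
  have hzS : ∀ n, z ∈ S (seq n) := by
    intro n
    have hlsc : LowerSemicontinuous (fun w => f w + σ * edist (seq n) w) :=
      hf.add (((ENNReal.continuous_const_mul hσt).comp
        (continuous_const.edist continuous_id)).lowerSemicontinuous)
    have hcl : IsClosed ((fun w => f w + σ * edist (seq n) w) ⁻¹' Iic (f (seq n))) :=
      hlsc.isClosed_preimage _
    exact hcl.mem_of_tendsto hz (eventually_atTop.mpr ⟨n, fun m hm => hchain n m hm⟩)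
  refine ⟨z, by rw [← hseq0]; exact hzS 0, ?_⟩
  by_contra hcon
  push_neg at hcon
  obtain ⟨w, hw⟩ := hcon
  have hwSz : w ∈ S z := hw.le
  have hwSn : ∀ n, w ∈ S (seq n) := fun n => htrans _ _ _ (hzS n) hwSz
  have hfzw : ∀ n : ℕ, f z ≤ f w + (2:ℝ≥0∞)⁻¹ ^ n := by
    intro n
    have h1 : f z ≤ f (seq (n+1)) := hle _ _ (hzS (n+1))
    have h2 : f (seq (n+1)) < (⨅ w' : S (seq n), f w') + (2:ℝ≥0∞)⁻¹ ^ n := by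
      rw [hseqsucc]; exact hlt _ (hfin n) n
    have h3 : (⨅ w' : S (seq n), f w') ≤ f w := iInf_le_of_le ⟨w, hwSn n⟩ le_rfl
    exact h1.trans (h2.le.trans (by gcongr))
  have hfzw' : f z ≤ f w := by
    have h0 : (⨅ n : ℕ, (2:ℝ≥0∞)⁻¹ ^ n) = 0 := by
      by_contra h
      obtain ⟨n, hn⟩ := ENNReal.exists_inv_two_pow_lt h
      exact absurd (iInf_le _ n) (not_le.mpr hn)
    calc f z ≤ ⨅ n : ℕ, (f w + (2:ℝ≥0∞)⁻¹ ^ n) := le_iInf hfzw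
      _ = f w + ⨅ n : ℕ, (2:ℝ≥0∞)⁻¹ ^ n := by rw [ENNReal.add_iInf]
      _ = f w := by rw [h0, add_zero]
  exact absurd (hw.trans_le (hfzw'.trans le_self_add)) (lt_irrefl _)


variable {X Y : Type*} [NormedAddCommGroup X] [NormedSpace ℝ X]
  [NormedAddCommGroup Y] [NormedSpace ℝ Y]

lemma lscEnv_lsc (F : X → Set Y) (y : Y) : LowerSemicontinuous (fun x => lscEnv F x y) := by
  intro x b hb
  obtain ⟨b', hbb', hb'⟩ := exists_between hb
  have hev : ∀ᶠ w in 𝓝 x, b' < EMetric.infEdist y (F w) :=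
    Filter.eventually_lt_of_lt_liminf hb'
  obtain ⟨s, hs, hsub⟩ := hev.exists_mem
  filter_upwards [interior_mem_nhds.mpr hs] with x' hx'
  have hev' : ∀ᶠ w in 𝓝 x', b' ≤ EMetric.infEdist y (F w) :=
    Filter.mem_of_superset (isOpen_interior.mem_nhds hx')
      (fun w hw => (hsub w (interior_subset hw)).le)
  exact lt_of_lt_of_le hbb' (Filter.le_liminf_of_le (by isBoundedDefault) hev')

lemma lscEnv_le_infEdist (F : X → Set Y) (x : X) (y : Y) :
    lscEnv F x y ≤ EMetric.infEdist y (F x) :=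
  Filter.liminf_le_of_frequently_le
    (Filter.frequently_iff.mpr fun hs => ⟨x, mem_of_mem_nhds hs, le_rfl⟩)
    (by isBoundedDefault)

lemma mem_of_lscEnv_eq_zero {F : X → Set Y} (hF : IsClosed {p : X × Y | p.2 ∈ F p.1})
    {z : X} {y : Y} (h : lscEnv F z y = 0) : y ∈ F z := by
  have hfreq : ∀ n : ℕ, ∃ w, dist w z < 1/(n+1) ∧
      EMetric.infEdist y (F w) < ((n:ℝ≥0∞)+1)⁻¹ := by
    intro n
    have h1 : ((n:ℝ≥0∞)+1)⁻¹ ≠ 0 := by simp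
    have h2 : ∃ᶠ w in 𝓝 z, EMetric.infEdist y (F w) < ((n:ℝ≥0∞)+1)⁻¹ := by
      by_contra hcon
      rw [Filter.not_frequently] at hcon
      have h3 : ((n:ℝ≥0∞)+1)⁻¹ ≤ lscEnv F z y :=
        Filter.le_liminf_of_le (by isBoundedDefault)
          (hcon.mono fun w hw => not_lt.mp hw)
      rw [h, le_zero_iff] at h3
      exact h1 h3
    obtain ⟨w, hw1, hw2⟩ := Filter.frequently_iff.mp h2
      (Metric.ball_mem_nhds z (by positivity : (0:ℝ) < 1/(n+1)))
    exact ⟨w, by simpa [Metric.mem_ball] using hw1, hw2⟩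
  choose w hw1 hw2 using hfreq
  have hy' : ∀ n : ℕ, ∃ y' ∈ F (w n), edist y y' < ((n:ℝ≥0∞)+1)⁻¹ :=
    fun n => EMetric.infEdist_lt_iff.mp (hw2 n)
  choose y' hy'1 hy'2 using hy'
  have htendw : Tendsto w atTop (𝓝 z) := by
    rw [tendsto_iff_dist_tendsto_zero]
    exact squeeze_zero (fun n => dist_nonneg) (fun n => (hw1 n).le)
      tendsto_one_div_add_atTop_nhds_zero_nat
  have htendy : Tendsto y' atTop (𝓝 y) := by
    rw [EMetric.tendsto_atTop]
    intro ε hε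
    obtain ⟨N, hN⟩ := ENNReal.exists_inv_nat_lt hε.ne'
    refine ⟨N, fun n hn => ?_⟩
    have h4 : ((n:ℝ≥0∞)+1)⁻¹ ≤ ((N:ℝ≥0∞))⁻¹ := by
      apply ENNReal.inv_le_inv'
      exact_mod_cast le_trans (Nat.cast_le.mpr hn) (by simp : (n:ℝ≥0∞) ≤ n + 1)
    rw [edist_comm]
    exact lt_of_lt_of_le (hy'2 n) (h4.trans hN.le)
  have hmem : ∀ n, (w n, y' n) ∈ {p : X × Y | p.2 ∈ F p.1} := fun n => hy'1 n
  exact hF.isSeqClosed hmem (htendw.prodMk_nhds htendy)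

lemma localSlope_le_of_forall {f : X → ℝ≥0∞} {z : X} {σ : ℝ≥0∞}
    (hzt : f z ≠ ⊤) (h : ∀ w, f z ≤ f w + σ * edist z w) : localSlope f z ≤ σ := by
  rw [localSlope, if_neg hzt]
  split_ifs with hmin
  · exact zero_le
  · refine Filter.limsup_le_of_le (by isBoundedDefault) ?_
    filter_upwards [eventually_mem_nhdsWithin] with w hw
    have hne : edist z w ≠ 0 := by
      exact (edist_pos.mpr (Ne.symm hw)).ne'
    rw [ENNReal.div_le_iff_le_mul (Or.inl hne) (Or.inl (edist_ne_top z w))]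
    rw [tsub_le_iff_right]
    calc f z ≤ f w + σ * edist z w := h w
      _ = σ * edist z w + f w := add_comm _ _


lemma mem_biInf_principal {α : Type*} {C : ℝ → Set α}
    (hmono : ∀ a b : ℝ, a ≤ b → C a ⊆ C b) {t : Set α}
    (ht : t ∈ ⨅ (δ : ℝ) (_ : 0 < δ), 𝓟 (C δ)) : ∃ δ > (0:ℝ), C δ ⊆ t := by
  have hd : DirectedOn ((fun δ : ℝ => 𝓟 (C δ)) ⁻¹'o (· ≥ ·)) (Ioi 0) := by
    intro a ha b hb
    refine ⟨min a b, mem_Ioi.mpr (lt_min ha hb), ?_, ?_⟩ <;>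
      exact principal_mono.mpr (hmono _ _ (by simp [min_le_left, min_le_right]))
  have ht' : t ∈ ⨅ δ ∈ Ioi (0:ℝ), 𝓟 (C δ) := ht
  obtain ⟨δ, hδ, htδ⟩ := (Filter.mem_biInf_of_directed hd ⟨1, mem_Ioi.mpr zero_lt_one⟩).mp ht'
  exact ⟨δ, hδ, htδ⟩

set_option maxHeartbeats 1000000 in
lemma dirRegFilter_mem {F : X → Set Y} {xbar : X} {ybar : Y} {u : X} {v : Y} {γ : ℝ}
    {s : Set (X × Y)} (hs : s ∈ dirRegFilter F xbar ybar u v γ) :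
    ∃ r₀ > (0:ℝ), ∃ δ₀ > (0:ℝ), ∃ η₀ > (0:ℝ), ∀ p : X × Y,
      ‖p.1 - xbar‖ + ‖p.2 - ybar‖ < r₀ →
      (p.1 - xbar, p.2 - ybar) ∈ coneBall2 u v δ₀ →
      0 < lscEnv F p.1 p.2 →
      lscEnv F p.1 p.2 ^ γ < ENNReal.ofReal (η₀ * (‖p.1 - xbar‖ + ‖p.2 - ybar‖)) →
      p ∈ s := by
  obtain ⟨t₁, ht₁, t₂, ht₂, hs12⟩ := Filter.mem_inf_iff.mp hs
  obtain ⟨t₃, ht₃, t₄, ht₄, h134⟩ := Filter.mem_inf_iff.mp ht₁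
  obtain ⟨t₅, ht₅, t₆, ht₆, h356⟩ := Filter.mem_inf_iff.mp ht₃
  obtain ⟨r₀, hr₀, hball⟩ := Metric.mem_nhds_iff.mp ht₅
  obtain ⟨δ₀, hδ₀, hcone⟩ := mem_biInf_principal
    (C := fun δ => {p : X × Y | (p.1 - xbar, p.2 - ybar) ∈ coneBall2 u v δ})
    (fun a b hab p hp => by
      obtain ⟨lam, h1, w, z, h2, h3⟩ := hp
      exact ⟨lam, h1, w, z, lt_of_lt_of_le h2 hab, h3⟩) ht₆
  obtain ⟨η₀, hη₀, heta⟩ := mem_biInf_principal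
    (C := fun η => {p : X × Y |
      lscEnv F p.1 p.2 ^ γ < ENNReal.ofReal (η * (‖p.1 - xbar‖ + ‖p.2 - ybar‖))})
    (fun a b hab p hp => lt_of_lt_of_le hp
      (ENNReal.ofReal_le_ofReal (mul_le_mul_of_nonneg_right hab
        (by positivity)))) ht₂
  refine ⟨r₀, hr₀, δ₀, hδ₀, η₀, hη₀, fun p h1 h2 h3 h4 => ?_⟩
  have hp5 : p ∈ t₅ := by
    apply hball
    rw [Metric.mem_ball, Prod.dist_eq]
    rw [dist_eq_norm, dist_eq_norm]
    exact max_lt (lt_of_le_of_lt (le_add_of_nonneg_right (norm_nonneg _)) h1)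
      (lt_of_le_of_lt (le_add_of_nonneg_left (norm_nonneg _)) h1)
  have hp4 : p ∈ t₄ := mem_of_mem_of_subset h3 ht₄
  rw [hs12, h134, h356]
  exact ⟨⟨⟨hp5, hcone h2⟩, hp4⟩, heta h4⟩


end AuxLemmas

set_option maxHeartbeats 1000000 in
/-- Theorem 2 of the paper: if the liminf of the local slopes
`|∇ φ^γ(·,y)|(x)`, taken as `(x,y) →_{(u,v)} (xbar,ybar)` with `φ(x,y) > 0` and
`φ(x,y)^γ/‖(x,y) − (xbar,ybar)‖ → 0`, is positive, then there exist `τ, δ > 0` with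
`d(x, F⁻¹(y)) ≤ τ d(y, F(x))^γ` for all `(x,y) ∈ B((xbar,ybar),δ)` with
`(x,y) ∈ (xbar,ybar) + cone B((u,v),δ)` and `d(y,F(x)) ≤ δ‖(x,y) − (xbar,ybar)‖^(1/γ)`;
i.e. `F` is directionally metrically `γ`-regular at `(xbar,ybar)` in direction `(u,v)`. -/
theorem dirHolderRegular_of_liminf_localSlope_pos
    {X Y : Type*} [NormedAddCommGroup X] [NormedSpace ℝ X] [CompleteSpace X]
    [NormedAddCommGroup Y] [NormedSpace ℝ Y]
    (F : X → Set Y) (hF : IsClosed {p : X × Y | p.2 ∈ F p.1})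
    (xbar : X) (ybar : Y) (hxy : ybar ∈ F xbar) (u : X) (v : Y)
    (γ : ℝ) (hγ0 : 0 < γ) (hγ1 : γ ≤ 1)
    (hslope : 0 < Filter.liminf
        (fun p : X × Y => localSlope (fun x : X => lscEnv F x p.2 ^ γ) p.1)
        (dirRegFilter F xbar ybar u v γ)) :
    ∃ τ > (0:ℝ), ∃ δ > (0:ℝ), ∀ x : X, ∀ y : Y,
      ‖x - xbar‖ + ‖y - ybar‖ < δ →
      (x - xbar, y - ybar) ∈ coneBall2 u v δ →
      EMetric.infEdist y (F x) ≤ ENNReal.ofReal (δ * (‖x - xbar‖ + ‖y - ybar‖) ^ (1/γ)) →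
      EMetric.infEdist x {x' : X | y ∈ F x'} ≤
        ENNReal.ofReal τ * EMetric.infEdist y (F x) ^ γ := by
  classical
  obtain ⟨c₀, hc₀pos, hc₀lt⟩ := exists_between hslope
  set c : ℝ≥0∞ := min c₀ 1 with hc_def
  have hcpos : 0 < c := lt_min hc₀pos zero_lt_one
  have hclt : c < Filter.liminf
      (fun p : X × Y => localSlope (fun x : X => lscEnv F x p.2 ^ γ) p.1)
      (dirRegFilter F xbar ybar u v γ) := lt_of_le_of_lt (min_le_left _ _) hc₀lt
  have hcne : c ≠ 0 := hcpos.ne'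
  have hcT : c ≠ ⊤ := (lt_of_le_of_lt (min_le_right _ _) ENNReal.one_lt_top).ne
  set σ : ℝ := c.toReal / 2 with hσ_def
  have hσpos : 0 < σ := half_pos (ENNReal.toReal_pos hcne hcT)
  have hofσ : ENNReal.ofReal σ = c / 2 := by
    rw [hσ_def, ENNReal.ofReal_div_of_pos (by norm_num), ENNReal.ofReal_toReal hcT]
    norm_num
  have hσltc : ENNReal.ofReal σ < c := by
    rw [hofσ]; exact ENNReal.half_lt_self hcne hcT
  have hσne0 : ENNReal.ofReal σ ≠ 0 := (ENNReal.ofReal_pos.mpr hσpos).ne'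
  have hev : ∀ᶠ p in dirRegFilter F xbar ybar u v γ,
      c < localSlope (fun x : X => lscEnv F x p.2 ^ γ) p.1 :=
    Filter.eventually_lt_of_lt_liminf hclt
  obtain ⟨r₀, hr₀, δ₀, hδ₀, η₀, hη₀, H⟩ := dirRegFilter_mem hev
  set M : ℝ := ‖u‖ + ‖v‖ + 1 with hM_def
  have hM : 0 < M := by positivity
  set εm : ℝ := min (1/2) (δ₀ / (2 * M)) with hεm_def
  have hεm : 0 < εm := lt_min (by norm_num) (by positivity)
  have hεm_half : εm ≤ 1/2 := min_le_left _ _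
  have hεm_cone : εm ≤ δ₀ / (2 * M) := min_le_right _ _
  set δ : ℝ := min (min (r₀/2) (min (δ₀/4) 1))
      (min ((σ * εm) ^ (1/γ)) ((η₀/4) ^ (1/γ))) with hδ_def
  have hδpos : 0 < δ := by
    refine lt_min (lt_min (by positivity) (lt_min (by positivity) one_pos)) (lt_min ?_ ?_) <;>
      exact Real.rpow_pos_of_pos (by positivity) _
  have hδr : δ ≤ r₀/2 := le_trans (min_le_left _ _) (min_le_left _ _)
  have hδδ₀ : δ ≤ δ₀/4 := le_trans (min_le_left _ _) (le_trans (min_le_right _ _) (min_le_left _ _))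
  have hδ1 : δ ≤ 1 := le_trans (min_le_left _ _) (le_trans (min_le_right _ _) (min_le_right _ _))
  have hpow : ∀ s : ℝ, 0 < s → δ ≤ s ^ (1/γ) → δ ^ γ ≤ s := by
    intro s hs hle
    calc δ ^ γ ≤ (s ^ (1/γ)) ^ γ := Real.rpow_le_rpow hδpos.le hle hγ0.le
      _ = s := by
        rw [← Real.rpow_mul hs.le, one_div, inv_mul_cancel₀ hγ0.ne', Real.rpow_one]
  have hδγ_σ : δ ^ γ ≤ σ * εm := hpow _ (by positivity)
    (le_trans (min_le_right _ _) (min_le_left _ _))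
  have hδγ_η : δ ^ γ ≤ η₀/4 := hpow _ (by positivity)
    (le_trans (min_le_right _ _) (min_le_right _ _))
  refine ⟨σ⁻¹, inv_pos.mpr hσpos, δ, hδpos, fun x y hball hconexy hd => ?_⟩
  set N : ℝ := ‖x - xbar‖ + ‖y - ybar‖ with hN_def
  have hN0 : (0:ℝ) ≤ N := by positivity
  rcases hN0.eq_or_lt with hN | hN
  · -- N = 0 : x = xbar, y = ybar
    have hx1 : ‖x - xbar‖ = 0 := le_antisymm (by
      have := norm_nonneg (y - ybar); rw [hN_def] at hN; linarith) (norm_nonneg _)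
    have hy1 : ‖y - ybar‖ = 0 := le_antisymm (by
      have := norm_nonneg (x - xbar); rw [hN_def] at hN; linarith) (norm_nonneg _)
    have hx : x = xbar := by rwa [norm_eq_zero, sub_eq_zero] at hx1
    have hy : y = ybar := by rwa [norm_eq_zero, sub_eq_zero] at hy1
    subst hx; subst hy
    rw [show EMetric.infEdist x {x' : X | y ∈ F x'} = 0 from EMetric.infEdist_zero_of_mem (show x ∈ {x' : X | y ∈ F x'} from hxy)]
    exact zero_le
  · set f : X → ℝ≥0∞ := fun x' => lscEnv F x' y ^ γ with hf_def
    have hflsc : LowerSemicontinuous f :=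
      ENNReal.continuous_rpow_const.comp_lowerSemicontinuous (lscEnv_lsc F y)
        (fun a b hab => ENNReal.rpow_le_rpow hab hγ0.le)
    have hii : ((δ * N ^ (1/γ)) : ℝ) ^ γ = δ ^ γ * N := by
      rw [Real.mul_rpow hδpos.le (Real.rpow_nonneg hN.le _), ← Real.rpow_mul hN.le,
        one_div, inv_mul_cancel₀ hγ0.ne', Real.rpow_one]
    have hfx : f x ≤ ENNReal.ofReal (δ ^ γ * N) := by
      calc f x ≤ (EMetric.infEdist y (F x)) ^ γ :=
            ENNReal.rpow_le_rpow (lscEnv_le_infEdist F x y) hγ0.le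
        _ ≤ (ENNReal.ofReal (δ * N ^ (1/γ))) ^ γ := ENNReal.rpow_le_rpow hd hγ0.le
        _ = ENNReal.ofReal ((δ * N ^ (1/γ)) ^ γ) :=
            ENNReal.ofReal_rpow_of_nonneg (by positivity) hγ0.le
        _ = ENNReal.ofReal (δ ^ γ * N) := by rw [hii]
    have hfxT : f x ≠ ⊤ := ne_top_of_le_ne_top ENNReal.ofReal_ne_top hfx
    obtain ⟨z, hz1, hz2⟩ :=
      my_ekeland f hflsc (ENNReal.ofReal σ) hσne0 ENNReal.ofReal_ne_top x hfxT
    have hfzx : f z ≤ f x := le_trans le_self_add hz1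
    have hedxz : edist x z ≤ f x / ENNReal.ofReal σ := by
      rw [ENNReal.le_div_iff_mul_le (Or.inl hσne0) (Or.inl ENNReal.ofReal_ne_top), mul_comm]
      exact le_trans le_add_self hz1
    set ε' : ℝ := δ ^ γ / σ with hε'_def
    have hε'pos : 0 < ε' := by positivity
    have hε'εm : ε' ≤ εm := by
      rw [hε'_def, div_le_iff₀ hσpos]
      linarith [hδγ_σ]
    have hε'half : ε' ≤ 1/2 := hε'εm.trans hεm_half
    have hzx : ‖z - x‖ ≤ ε' * N := by
      have h1 : edist x z ≤ ENNReal.ofReal (ε' * N) := by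
        calc edist x z ≤ f x / ENNReal.ofReal σ := hedxz
          _ ≤ ENNReal.ofReal (δ ^ γ * N) / ENNReal.ofReal σ := ENNReal.div_le_div_right hfx _
          _ = ENNReal.ofReal (δ ^ γ * N / σ) := (ENNReal.ofReal_div_of_pos hσpos).symm
          _ = ENNReal.ofReal (ε' * N) := by congr 1; rw [hε'_def]; ring
      rw [edist_dist] at h1
      have h2 : dist x z ≤ ε' * N :=
        (ENNReal.ofReal_le_ofReal_iff (by positivity)).mp h1
      rwa [dist_eq_norm, norm_sub_rev] at h2
    by_cases hfz0 : lscEnv F z y = 0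
    · have hyz : y ∈ F z := mem_of_lscEnv_eq_zero hF hfz0
      calc EMetric.infEdist x {x' : X | y ∈ F x'} ≤ edist x z :=
            EMetric.infEdist_le_edist_of_mem hyz
        _ ≤ f x / ENNReal.ofReal σ := hedxz
        _ ≤ (EMetric.infEdist y (F x)) ^ γ / ENNReal.ofReal σ := by
            gcongr
            exact ENNReal.rpow_le_rpow (lscEnv_le_infEdist F x y) hγ0.le
        _ = ENNReal.ofReal σ⁻¹ * (EMetric.infEdist y (F x)) ^ γ := by
            rw [ENNReal.ofReal_inv_of_pos hσpos, ENNReal.div_eq_inv_mul]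
    · exfalso
      have hφpos : 0 < lscEnv F z y := zero_lt_iff.mpr hfz0
      have hfzT : f z ≠ ⊤ := ne_top_of_le_ne_top hfxT hfzx
      have htri1 : ‖z - xbar‖ ≤ ‖z - x‖ + ‖x - xbar‖ := by
        calc ‖z - xbar‖ = ‖(z - x) + (x - xbar)‖ := by rw [sub_add_sub_cancel]
          _ ≤ ‖z - x‖ + ‖x - xbar‖ := norm_add_le _ _
      have htri2 : ‖x - xbar‖ ≤ ‖x - z‖ + ‖z - xbar‖ := by
        calc ‖x - xbar‖ = ‖(x - z) + (z - xbar)‖ := by rw [sub_add_sub_cancel]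
          _ ≤ ‖x - z‖ + ‖z - xbar‖ := norm_add_le _ _
      have hxz_norm : ‖x - z‖ = ‖z - x‖ := norm_sub_rev _ _
      have hε'N : ε' * N ≤ N / 2 := by
        have := mul_le_mul_of_nonneg_right hε'half hN.le
        linarith
      have hNball : N < δ := hball
      have hNz_ub : ‖z - xbar‖ + ‖y - ybar‖ < r₀ := by
        have : ‖z - xbar‖ + ‖y - ybar‖ ≤ ‖z - x‖ + N := by
          linarith [htri1, hN_def.le, hN_def.ge]
        have t1 : ‖z - x‖ ≤ N/2 := le_trans hzx hε'N
        have t2 : N ≤ r₀/2 := by linarith [hNball, hδr]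
        linarith [t1, t2, hr₀, this]
      have hNz_lb : N / 2 ≤ ‖z - xbar‖ + ‖y - ybar‖ := by
        have : N ≤ ‖z - x‖ + (‖z - xbar‖ + ‖y - ybar‖) := by
          rw [hxz_norm] at htri2
          linarith [htri2, hN_def.le, hN_def.ge]
        have t1 : ‖z - x‖ ≤ N/2 := le_trans hzx hε'N
        linarith [this, t1]
      -- cone membership for (z, y)
      obtain ⟨lam, hlam0, w, z', hwz, heq⟩ := hconexy
      have heq1 : x - xbar = lam • w := congrArg Prod.fst heq
      have heq2 : y - ybar = lam • z' := congrArg Prod.snd heq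
      have hNlam : lam * (‖w‖ + ‖z'‖) = N := by
        rw [hN_def, heq1, heq2, norm_smul, norm_smul, Real.norm_of_nonneg hlam0]
        ring
      have hlampos : 0 < lam := by
        rcases hlam0.eq_or_lt with h | h
        · exfalso; rw [← h] at hNlam; simp at hNlam; linarith
        · exact h
      have hwz_ub : ‖w‖ + ‖z'‖ ≤ M := by
        have h1 : ‖w‖ ≤ ‖u‖ + ‖w - u‖ := by
          calc ‖w‖ = ‖u + (w - u)‖ := by congr 1; abel
            _ ≤ ‖u‖ + ‖w - u‖ := norm_add_le _ _
        have h2 : ‖z'‖ ≤ ‖v‖ + ‖z' - v‖ := by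
          calc ‖z'‖ = ‖v + (z' - v)‖ := by congr 1; abel
            _ ≤ ‖v‖ + ‖z' - v‖ := norm_add_le _ _
        rw [hM_def]; linarith [hwz, hδ1]
      have hlam_lb : N / M ≤ lam := by
        rw [div_le_iff₀ hM]
        nlinarith
      have hlaminv : lam⁻¹ ≤ M / N := by
        have h := one_div_le_one_div_of_le (by positivity : (0:ℝ) < N / M) hlam_lb
        rw [one_div_div] at h
        rwa [one_div] at h
      have hcone' : (z - xbar, y - ybar) ∈ coneBall2 u v δ₀ := by
        refine ⟨lam, hlam0, w + lam⁻¹ • (z - x), z', ?_, ?_⟩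
        · have h1 : ‖w + lam⁻¹ • (z - x) - u‖ ≤ ‖w - u‖ + lam⁻¹ * ‖z - x‖ := by
            calc ‖w + lam⁻¹ • (z - x) - u‖ = ‖(w - u) + lam⁻¹ • (z - x)‖ := by rw [add_sub_right_comm]
              _ ≤ ‖w - u‖ + ‖lam⁻¹ • (z - x)‖ := norm_add_le _ _
              _ = ‖w - u‖ + lam⁻¹ * ‖z - x‖ := by
                  rw [norm_smul, Real.norm_of_nonneg (inv_nonneg.mpr hlam0)]

          have h2 : lam⁻¹ * ‖z - x‖ ≤ (M / N) * (ε' * N) := by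
            apply mul_le_mul hlaminv hzx (norm_nonneg _) (by positivity)
          have h3 : (M / N) * (ε' * N) = ε' * M := by field_simp
          have h4 : ε' * M ≤ δ₀ / 2 := by
            have h5 : εm * M ≤ δ₀ / 2 := by
              rw [le_div_iff₀ (by positivity : (0:ℝ) < 2*M)] at hεm_cone
              nlinarith [hεm_cone]
            nlinarith [hε'εm, hM]
          linarith [hwz, hδδ₀]
        · have hfst : z - xbar = lam • (w + lam⁻¹ • (z - x)) := by
            rw [smul_add, smul_inv_smul₀ hlampos.ne', ← heq1]
            abel
          rw [Prod.mk.injEq]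
          exact ⟨hfst, heq2⟩
      have heta' : lscEnv F z y ^ γ < ENNReal.ofReal (η₀ * (‖z - xbar‖ + ‖y - ybar‖)) := by
        refine lt_of_le_of_lt (hfzx.trans hfx) ?_
        have hS : 0 < ‖z - xbar‖ + ‖y - ybar‖ := by linarith [hNz_lb, hN]
        rw [ENNReal.ofReal_lt_ofReal_iff (mul_pos hη₀ hS)]
        have p1 : 0 ≤ η₀ * ((‖z - xbar‖ + ‖y - ybar‖) - N/2) :=
          mul_nonneg hη₀.le (by linarith [hNz_lb])
        have p2 : 0 ≤ (η₀/4 - δ^γ) * N := mul_nonneg (by linarith [hδγ_η]) hN.le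
        have p3 : 0 < (η₀/4) * N := by positivity
        nlinarith [p1, p2, p3]
      have hH : c < localSlope f z := H (z, y) hNz_ub hcone' hφpos heta'
      have hslope_le : localSlope f z ≤ ENNReal.ofReal σ := localSlope_le_of_forall hfzT hz2
      exact lt_asymm hH (lt_of_le_of_lt hslope_le hσltc)

end
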